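/- Let k ≥ 1 and let a = (a_1,…,a_k) be a k-tuple of positive integers. Then Φ(a, I) is even for every I ∈ {0,1}^k with ε_1 + ⋯ + ε_k < k (that is, for every 0/1 vector I other than (1,…,1)) if and only if a_i ≡ 1 (mod 2^{⌊log₂(2i)⌋}) for every 1 ≤ i ≤ k. -/

import Mathlib

open Finset Nat PowerSeries



-- Lucas mod 2 in ZMod 2 form
lemma lucas2 (n b : ℕ) :
    ((n.choose b : ZMod 2)) = ((n % 2).choose (b % 2) * ((n / 2).choose (b / 2)) : ℕ) := by
  have : Fact (Nat.Prime 2) := ⟨Nat.prime_two⟩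
  exact (ZMod.natCast_eq_natCast_iff _ _ _).mpr
    (Choose.choose_modEq_choose_mod_mul_choose_div_nat (p := 2))

lemma mc_odd {D b : ℕ} (hD : 2 ∣ D) (hb : ¬ 2 ∣ b) :
    ((Nat.multichoose D b : ZMod 2)) = 0 := by
  rw [Nat.multichoose_eq, lucas2]
  have h1 : (D + b - 1) % 2 = 0 := by omega
  have h2 : b % 2 = 1 := by omega
  rw [h1, h2]
  simp

lemma mc_double {D b : ℕ} (hD : 2 ∣ D) (hb : 2 ∣ b) :
    ((Nat.multichoose D b : ZMod 2)) = (Nat.multichoose (D / 2) (b / 2) : ZMod 2) := by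
  rcases Nat.eq_zero_or_pos b with hb0 | hbpos
  · subst hb0; simp
  rw [Nat.multichoose_eq, Nat.multichoose_eq, lucas2]
  have h1 : (D + b - 1) % 2 = 1 := by omega
  have h2 : b % 2 = 0 := by omega
  have h3 : (D + b - 1) / 2 = D / 2 + b / 2 - 1 := by omega
  rw [h1, h2, h3]
  simp

/-- Lemma A: if `2^n ∣ D` and `1 ≤ b < 2^n` then `multichoose D b` is even. -/
lemma mc_even_of_dvd : ∀ (n : ℕ) {D b : ℕ}, 2 ^ n ∣ D → 1 ≤ b → b < 2 ^ n →
    ((Nat.multichoose D b : ZMod 2)) = 0 := by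
  intro n
  induction n with
  | zero => intro D b _ h1 h2; omega
  | succ n IH =>
    intro D b hD h1 h2
    have hD2 : 2 ∣ D := dvd_trans (by exact Dvd.intro (2 ^ n) (by ring)) hD
    by_cases hb : 2 ∣ b
    · rw [mc_double hD2 hb]
      apply IH
      · obtain ⟨c, hc⟩ := hD
        refine ⟨c, ?_⟩
        subst hc
        rw [pow_succ, show 2 ^ n * 2 * c = 2 * (2 ^ n * c) by ring,
          Nat.mul_div_cancel_left _ (by norm_num)]
      · omega
      · have := Nat.pow_succ 2 n ▸ h2; omega
    · exact mc_odd hD2 hb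

/-- Lemma B: if `multichoose D b` is even for all `1 ≤ b ≤ r` then `2^(log 2 (2r)) ∣ D`. -/
lemma dvd_of_mc_even : ∀ (r : ℕ) (D : ℕ), 1 ≤ r →
    (∀ b, 1 ≤ b → b ≤ r → ((Nat.multichoose D b : ZMod 2)) = 0) →
    2 ^ (Nat.log 2 (2 * r)) ∣ D := by
  intro r
  induction r using Nat.strong_induction_on with
  | _ r IH =>
    intro D hr h
    have hD2 : 2 ∣ D := by
      have := h 1 le_rfl hr
      rw [Nat.multichoose_one_right] at this
      exact (ZMod.natCast_eq_zero_iff D 2).mp this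
    rcases eq_or_lt_of_le hr with hr1 | hr2
    · have : Nat.log 2 (2 * 1) = 1 := by
        rw [mul_comm]; simpa using Nat.log_mul_base one_lt_two one_ne_zero
      rw [← hr1, this]; simpa using hD2
    · -- r ≥ 2
      have hr2' : 2 ≤ r := hr2
      have hhalf : 1 ≤ r / 2 := by omega
      have hlt : r / 2 < r := by omega
      have key := IH (r / 2) hlt (D / 2) hhalf ?_
      · have hD : D = 2 * (D / 2) := by omega
        have hlog1 : Nat.log 2 (2 * r) = Nat.log 2 r + 1 := by
          rw [mul_comm]; exact Nat.log_mul_base one_lt_two (by omega)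
        have hlog2 : Nat.log 2 (2 * (r / 2)) = Nat.log 2 (r / 2) + 1 := by
          rw [mul_comm]; exact Nat.log_mul_base one_lt_two (by omega)
        have hlog3 : Nat.log 2 (r / 2) = Nat.log 2 r - 1 := Nat.log_div_base 2 r
        have hlog4 : 1 ≤ Nat.log 2 r :=
          (Nat.le_log_iff_pow_le one_lt_two (by omega)).mpr (by simpa using hr2')
        rw [hlog1]
        have : Nat.log 2 r = Nat.log 2 (2 * (r / 2)) := by omega
        rw [this, pow_succ]
        calc 2 ^ Nat.log 2 (2 * (r / 2)) * 2 ∣ (D / 2) * 2 :=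
              Nat.mul_dvd_mul_right key 2
          _ = D := by omega
      · intro b hb1 hb2
        have := h (2 * b) (by omega) (by omega)
        rw [mc_double hD2 ⟨b, rfl⟩] at this
        simpa using this



lemma coeff_iosp (c n : ℕ) :
    PowerSeries.coeff n ((invOneSubPow (ZMod 2) c : (ZMod 2)⟦X⟧ˣ) : (ZMod 2)⟦X⟧)
      = (Nat.multichoose c n : ZMod 2) := by
  cases c with
  | zero =>
    rw [invOneSubPow_zero]
    cases n with
    | zero => simp
    | succ n => simp [Nat.multichoose_zero_succ, PowerSeries.coeff_one]
  | succ c =>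
    rw [invOneSubPow_val_succ_eq_mk_add_choose, PowerSeries.coeff_mk]
    rw [Nat.multichoose_eq]
    have h1 : c + 1 + n - 1 = c + n := by omega
    rw [h1, Nat.choose_symm_add]

lemma prod_iosp {ι : Type*} (s : Finset ι) (c : ι → ℕ) :
    ∏ i ∈ s, ((invOneSubPow (ZMod 2) (c i) : (ZMod 2)⟦X⟧ˣ) : (ZMod 2)⟦X⟧)
      = ((invOneSubPow (ZMod 2) (∑ i ∈ s, c i) : (ZMod 2)⟦X⟧ˣ) : (ZMod 2)⟦X⟧) := by
  have : invOneSubPow (ZMod 2) (∑ i ∈ s, c i) = ∏ i ∈ s, invOneSubPow (ZMod 2) (c i) := by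
    simp only [invOneSubPow_eq_inv_one_sub_pow]
    rw [← Finset.prod_pow_eq_pow_sum]
  rw [this, ← Units.coeHom_apply, map_prod]
  rfl

/-- Vandermonde convolution for multichoose, mod 2. -/
lemma conv_sum (k m : ℕ) (hm : m ≤ k) (c : Fin k → ℕ) :
    ∑ B ∈ (Fintype.piFinset fun _ : Fin k => Finset.range (k + 1)).filter
        (fun B => ∑ i, B i = m),
      ∏ i, (Nat.multichoose (c i) (B i) : ZMod 2)
      = (Nat.multichoose (∑ i, c i) m : ZMod 2) := by
  rw [← coeff_iosp, ← prod_iosp, PowerSeries.coeff_prod]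
  refine (Finset.sum_bij' (fun (l : Fin k →₀ ℕ) (_ : l ∈ (Finset.univ : Finset (Fin k)).finsuppAntidiag m) => ⇑l)
    (fun (B : Fin k → ℕ) _ => Finsupp.equivFunOnFinite.symm B)
    ?_ ?_ ?_ ?_ ?_).symm
  · intro l hl
    rw [Finset.mem_finsuppAntidiag] at hl
    rw [Finset.mem_filter, Fintype.mem_piFinset]
    constructor
    · intro i
      show l i ∈ Finset.range (k+1)
      rw [Finset.mem_range]
      have : l i ≤ m := by
        rw [← hl.1]
        exact Finset.single_le_sum (fun _ _ => Nat.zero_le _) (Finset.mem_univ i)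
      omega
    · exact hl.1
  · intro B hB
    rw [Finset.mem_filter] at hB
    rw [Finset.mem_finsuppAntidiag]
    refine ⟨?_, Finset.subset_univ _⟩
    show Finset.univ.sum ⇑(Finsupp.equivFunOnFinite.symm B) = m
    rw [← hB.2]
    simp [Finsupp.equivFunOnFinite]
    rfl
  · intro l _; exact Finsupp.equivFunOnFinite.symm_apply_apply l
  · intro B _; exact Finsupp.equivFunOnFinite.apply_symm_apply B
  · intro l _
    exact Finset.prod_congr rfl fun i _ => (coeff_iosp (c i) (l i))



lemma sum_fin_le {M : Type*} [AddCommMonoid M] {k : ℕ} (f : ℕ → M) (j : Fin k) :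
    ∑ i ∈ Finset.univ.filter (fun i : Fin k => i ≤ j), f (i.1 + 1)
      = ∑ v ∈ Finset.Icc 1 (j.1 + 1), f v := by
  refine Finset.sum_bij' (fun (i : Fin k) (_ : i ∈ Finset.univ.filter (fun i : Fin k => i ≤ j)) => i.1 + 1)
    (fun (v : ℕ) (hv : v ∈ Finset.Icc 1 (j.1 + 1)) =>
      (⟨v - 1, by rw [Finset.mem_Icc] at hv; omega⟩ : Fin k)) ?_ ?_ ?_ ?_ ?_
  · intro i hi
    rw [Finset.mem_filter] at hi
    have h2 : i.1 ≤ j.1 := hi.2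
    show i.1 + 1 ∈ Finset.Icc 1 (j.1 + 1)
    rw [Finset.mem_Icc]
    omega
  · intro v hv
    rw [Finset.mem_Icc] at hv
    rw [Finset.mem_filter]
    exact ⟨Finset.mem_univ _, by rw [Fin.le_def]; show v - 1 ≤ j.1; omega⟩
  · intro i hi; ext; show i.1 + 1 - 1 = i.1; omega
  · intro v hv; rw [Finset.mem_Icc] at hv; show v - 1 + 1 = v; omega
  · intro i hi; rfl

lemma sum_fin_all {M : Type*} [AddCommMonoid M] {k : ℕ} (f : ℕ → M) :
    ∑ i : Fin k, f (i.1 + 1) = ∑ v ∈ Finset.Icc 1 k, f v := by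
  refine Finset.sum_bij' (fun (i : Fin k) (_ : i ∈ (Finset.univ : Finset (Fin k))) => i.1 + 1)
    (fun (v : ℕ) (hv : v ∈ Finset.Icc 1 k) =>
      (⟨v - 1, by rw [Finset.mem_Icc] at hv; omega⟩ : Fin k)) ?_ ?_ ?_ ?_ ?_
  · intro i _
    show i.1 + 1 ∈ Finset.Icc 1 k
    rw [Finset.mem_Icc]
    exact ⟨by omega, i.isLt⟩
  · intro v _; exact Finset.mem_univ _
  · intro i hi; ext; show i.1 + 1 - 1 = i.1; omega
  · intro v hv; rw [Finset.mem_Icc] at hv; show v - 1 + 1 = v; omega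
  · intro i hi; rfl

lemma sumI (s m : ℕ) : ∀ l : ℕ,
    ∑ v ∈ Finset.Icc 1 l, (if s - m + 1 ≤ v ∧ v ≤ s then 0 else 1)
      = l - (min l s - min l (s - m)) := by
  intro l
  induction l with
  | zero => simp
  | succ l IH =>
    rw [Finset.sum_Icc_succ_top (by omega : 1 ≤ l + 1), IH]
    split_ifs with h <;> omega


lemma choose_eq_mc {A b : ℕ} (hA : 1 ≤ A) :
    (A + b - 2).choose b = Nat.multichoose (A - 1) b := by
  rw [Nat.multichoose_eq]
  congr 1
  omega

lemma weight_even {A t b : ℕ} (hA : 1 ≤ A) (hmod : A ≡ 1 [MOD 2 ^ Nat.log 2 (2 * t)])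
    (hb1 : 1 ≤ b) (hbt : b ≤ t) : ((A + b - 2).choose b : ZMod 2) = 0 := by
  rw [choose_eq_mc hA]
  have hdvd : 2 ^ Nat.log 2 (2 * t) ∣ A - 1 := (Nat.modEq_iff_dvd' hA).mp hmod.symm
  have hlt : t < 2 ^ Nat.log 2 (2 * t) := by
    have hpow := Nat.lt_pow_succ_log_self one_lt_two (2 * t)
    rw [pow_succ] at hpow
    omega
  exact mc_even_of_dvd _ hdvd hb1 (by omega)


/-- `Phi k a I` is the sum `Σ_B ∏_{i=1}^k C(a_i + b_i - 2, b_i)` over all `k`-tuples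
`B = (b_1,…,b_k)` of nonnegative integers such that `B + I ∈ 𝒮_k` (i.e. the sum of the
first `j` entries of `B + I` is at most `j` for each `1 ≤ j ≤ k`) and
`(b_1+ε_1) + ⋯ + (b_k+ε_k) = k`.  Sequences are 1-indexed: the `i`-th entry of `a` is
`a i` for `1 ≤ i ≤ k`.  The top entry `a_i + b_i - 2` uses truncated subtraction. -/
def Phi (k : ℕ) (a I : ℕ → ℕ) : ℕ :=
  ∑ B ∈ (Fintype.piFinset fun _ : Fin k => Finset.range (k + 1)) |>.filter
      (fun B =>
        (∀ j : Fin k,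
          (∑ i ∈ Finset.univ.filter (fun i : Fin k => i ≤ j), (B i + I (i.1 + 1)))
            ≤ j.1 + 1) ∧
        (∑ i : Fin k, (B i + I (i.1 + 1))) = k),
    ∏ i : Fin k, Nat.choose (a (i.1 + 1) + B i - 2) (B i)















lemma phi_block (k : ℕ) (a : ℕ → ℕ) (ha : ∀ i ∈ Finset.Icc 1 k, 0 < a i)
    (r s m : ℕ) (hr1 : 1 ≤ r) (hrs : r ≤ s) (hsr : s ≤ r + 1) (hsk : s ≤ k)
    (hm1 : 1 ≤ m) (hmr : m ≤ r)
    (hgood : ∀ j, 1 ≤ j → j < r → a j ≡ 1 [MOD 2 ^ Nat.log 2 (2 * j)]) :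
    (Phi k a (fun v => if s - m + 1 ≤ v ∧ v ≤ s then 0 else 1) : ZMod 2)
      = (Nat.multichoose (∑ v ∈ Finset.Icc r k, (a v - 1)) m : ZMod 2)
        + (if s = r + 1 then (Nat.multichoose (a r - 1) m : ZMod 2) else 0) := by
  have hk : 1 ≤ k := by omega
  set I : ℕ → ℕ := fun v => if s - m + 1 ≤ v ∧ v ≤ s then 0 else 1 with hIdef
  set r₀ : Fin k := ⟨r - 1, by omega⟩ with hr₀def
  have hr₀v : r₀.1 + 1 = r := by show r - 1 + 1 = r; omega
  set c' : Fin k → ℕ := fun i => if i.1 + 1 < r then 0 else a (i.1 + 1) - 1 with hc'def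
  have hare : ∀ i : Fin k, 1 ≤ a (i.1 + 1) := fun i =>
    ha _ (Finset.mem_Icc.mpr ⟨by omega, by have := i.isLt; omega⟩)
  -- the weight functions
  set wC : (Fin k → ℕ) → ZMod 2 :=
    fun B => ∏ i : Fin k, ((a (i.1 + 1) + B i - 2).choose (B i) : ZMod 2) with hwC
  set wM : (Fin k → ℕ) → ZMod 2 :=
    fun B => ∏ i : Fin k, ((Nat.multichoose (c' i) (B i) : ℕ) : ZMod 2) with hwM
  -- the finsets
  set pis := (Fintype.piFinset fun _ : Fin k => Finset.range (k + 1)) with hpis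
  set Fs := pis.filter
      (fun B : Fin k → ℕ =>
        (∀ j : Fin k,
          (∑ i ∈ Finset.univ.filter (fun i : Fin k => i ≤ j), (B i + I (i.1 + 1)))
            ≤ j.1 + 1) ∧
        (∑ i : Fin k, (B i + I (i.1 + 1))) = k) with hFs
  set Gs := pis.filter
      (fun B : Fin k → ℕ => (∑ i : Fin k, B i = m) ∧ B r₀ + (s - r) ≤ m) with hGs
  set Hs := pis.filter (fun B : Fin k → ℕ => ∑ i : Fin k, B i = m) with hHs
  -- SI computations
  have SIj : ∀ j : Fin k,
      (∑ i ∈ Finset.univ.filter (fun i : Fin k => i ≤ j), I (i.1 + 1))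
        = (j.1 + 1) - (min (j.1 + 1) s - min (j.1 + 1) (s - m)) := by
    intro j; rw [sum_fin_le (f := I) j]; exact sumI s m _
  have SIall : (∑ i : Fin k, I (i.1 + 1)) = k - m := by
    rw [sum_fin_all (f := I), sumI]; omega
  -- step 1 : Phi cast
  have step1 : (Phi k a I : ZMod 2) = ∑ B ∈ Fs, wC B := by
    rw [Phi]
    push_cast
    rfl
  -- ballot bound
  have key1 : ∀ B : Fin k → ℕ,
      (∀ j : Fin k,
        (∑ i ∈ Finset.univ.filter (fun i : Fin k => i ≤ j), (B i + I (i.1 + 1)))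
          ≤ j.1 + 1) → ∀ i : Fin k, B i ≤ i.1 + 1 := by
    intro B h1 i
    have hmem : i ∈ Finset.univ.filter (fun x : Fin k => x ≤ i) := by
      simp
    calc B i ≤ B i + I (i.1 + 1) := Nat.le_add_right _ _
      _ ≤ ∑ x ∈ Finset.univ.filter (fun x : Fin k => x ≤ i), (B x + I (x.1 + 1)) :=
          Finset.single_le_sum (f := fun x : Fin k => B x + I (x.1 + 1))
            (fun x _ => Nat.zero_le _) hmem
      _ ≤ i.1 + 1 := h1 i
  -- kill lemmas
  have killC : ∀ B ∈ Fs, ¬ (∀ i : Fin k, i.1 + 1 < r → B i = 0) → wC B = 0 := by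
    intro B hB hng
    push_neg at hng
    obtain ⟨i₀, hi₀r, hi₀ne⟩ := hng
    rw [hFs, Finset.mem_filter] at hB
    refine Finset.prod_eq_zero (Finset.mem_univ i₀) ?_
    exact weight_even (hare i₀) (hgood (i₀.1 + 1) (by omega) hi₀r)
      (by omega) (key1 B hB.2.1 i₀)
  have killM : ∀ B : Fin k → ℕ, ¬ (∀ i : Fin k, i.1 + 1 < r → B i = 0) → wM B = 0 := by
    intro B hng
    push_neg at hng
    obtain ⟨i₀, hi₀r, hi₀ne⟩ := hng
    refine Finset.prod_eq_zero (Finset.mem_univ i₀) ?_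
    have : c' i₀ = 0 := by
      show (if i₀.1 + 1 < r then 0 else a (i₀.1 + 1) - 1) = 0
      rw [if_pos hi₀r]
    rw [this]
    obtain ⟨b, hb⟩ := Nat.exists_eq_succ_of_ne_zero hi₀ne
    rw [hb, Nat.multichoose_zero_succ]
    simp
  -- step 2 : change weights
  have step2 : ∑ B ∈ Fs, wC B = ∑ B ∈ Fs, wM B := by
    refine Finset.sum_congr rfl ?_
    intro B hB
    by_cases hg : ∀ i : Fin k, i.1 + 1 < r → B i = 0
    · rw [hwC, hwM]
      refine Finset.prod_congr rfl ?_
      intro i _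
      by_cases hir : i.1 + 1 < r
      · rw [hg i hir]
        have : c' i = 0 := by
          show (if i.1 + 1 < r then 0 else a (i.1 + 1) - 1) = 0
          rw [if_pos hir]
        rw [this]
        norm_num
      · have : c' i = a (i.1 + 1) - 1 := by
          show (if i.1 + 1 < r then 0 else a (i.1 + 1) - 1) = a (i.1 + 1) - 1
          rw [if_neg hir]
        rw [this, choose_eq_mc (hare i)]
    · rw [killC B hB hg, killM B hg]
  -- step 3 : the filtered sets agree
  have step3 : Fs.filter (fun B => ∀ i : Fin k, i.1 + 1 < r → B i = 0)
      = Gs.filter (fun B => ∀ i : Fin k, i.1 + 1 < r → B i = 0) := by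
    ext B
    simp only [hFs, hGs, Finset.mem_filter, and_assoc]
    constructor
    · rintro ⟨hpi, hbal, htot, hg⟩
      refine ⟨hpi, ?_, ?_, hg⟩
      · -- total sum
        rw [Finset.sum_add_distrib, SIall] at htot
        omega
      · -- bound at r₀
        have hb := hbal r₀
        rw [Finset.sum_add_distrib, SIj r₀] at hb
        have hsing : (∑ i ∈ Finset.univ.filter (fun i : Fin k => i ≤ r₀), B i) = B r₀ := by
          refine Finset.sum_eq_single_of_mem r₀ (by simp) ?_
          intro x hx hxne
          refine hg x ?_
          rw [Finset.mem_filter] at hx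
          have hxle : x.1 ≤ r₀.1 := hx.2
          have : x.1 ≠ r₀.1 := fun hc => hxne (Fin.ext hc)
          omega
        rw [hsing, hr₀v] at hb
        omega
    · rintro ⟨hpi, hsum, hbd, hg⟩
      refine ⟨hpi, ?_, ?_, hg⟩
      · -- ballot condition
        intro j
        rw [Finset.sum_add_distrib, SIj j]
        by_cases hjr : j.1 + 1 < r
        · have hz : (∑ i ∈ Finset.univ.filter (fun i : Fin k => i ≤ j), B i) = 0 := by
            refine Finset.sum_eq_zero ?_
            intro x hx
            rw [Finset.mem_filter] at hx
            have hxle : x.1 ≤ j.1 := hx.2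
            exact hg x (by omega)
          rw [hz]
          omega
        · have hle : (∑ i ∈ Finset.univ.filter (fun i : Fin k => i ≤ j), B i) ≤ m := by
            calc (∑ i ∈ Finset.univ.filter (fun i : Fin k => i ≤ j), B i)
                ≤ ∑ i : Fin k, B i :=
                  Finset.sum_le_sum_of_subset (Finset.subset_univ _)
              _ = m := hsum
          by_cases hjs : s ≤ j.1 + 1
          · omega
          · -- r ≤ j+1 < s  ⟹  s = r+1, j = r₀
            have hjr₀ : j = r₀ := by
              apply Fin.ext
              omega
            have hsing : (∑ i ∈ Finset.univ.filter (fun i : Fin k => i ≤ j), B i) = B r₀ := by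
              rw [hjr₀]
              refine Finset.sum_eq_single_of_mem r₀ (by simp) ?_
              intro x hx hxne
              refine hg x ?_
              rw [Finset.mem_filter] at hx
              have hxle : x.1 ≤ r₀.1 := hx.2
              have : x.1 ≠ r₀.1 := fun hc => hxne (Fin.ext hc)
              omega
            rw [hsing]
            omega
      · -- total
        rw [Finset.sum_add_distrib, SIall, hsum]
        omega
  -- step 4 : drop the good-filters
  have step4a : ∑ B ∈ Fs, wM B
      = ∑ B ∈ Fs.filter (fun B => ∀ i : Fin k, i.1 + 1 < r → B i = 0), wM B := by
    refine (Finset.sum_filter_of_ne ?_).symm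
    intro B hB hne
    by_contra hg
    exact hne (killM B hg)
  have step4b : ∑ B ∈ Gs, wM B
      = ∑ B ∈ Gs.filter (fun B => ∀ i : Fin k, i.1 + 1 < r → B i = 0), wM B := by
    refine (Finset.sum_filter_of_ne ?_).symm
    intro B hB hne
    by_contra hg
    exact hne (killM B hg)
  -- step 5 : Gs vs Hs
  have hGH : Hs.filter (fun B : Fin k → ℕ => B r₀ + (s - r) ≤ m) = Gs := by
    rw [hHs, hGs, Finset.filter_filter]
  have step5 : ∑ B ∈ Hs, wM B
      = ∑ B ∈ Gs, wM B
        + ∑ B ∈ Hs.filter (fun B : Fin k → ℕ => ¬ (B r₀ + (s - r) ≤ m)), wM B := by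
    rw [← hGH]
    exact (Finset.sum_filter_add_sum_filter_not Hs _ wM).symm
  -- step 6 : the correction term
  have step6 : ∑ B ∈ Hs.filter (fun B : Fin k → ℕ => ¬ (B r₀ + (s - r) ≤ m)), wM B
      = (if s = r + 1 then (Nat.multichoose (a r - 1) m : ZMod 2) else 0) := by
    by_cases hcase : s = r + 1
    · rw [if_pos hcase]
      have hBstar : Hs.filter (fun B : Fin k → ℕ => ¬ (B r₀ + (s - r) ≤ m))
          = {fun i : Fin k => if i = r₀ then m else 0} := by
        ext B
        simp only [Finset.mem_filter, Finset.mem_singleton, hHs, hpis, Fintype.mem_piFinset,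
          Finset.mem_range]
        constructor
        · rintro ⟨⟨hpi, hsum⟩, hbig⟩
          have hble : B r₀ ≤ m := by
            rw [← hsum]
            exact Finset.single_le_sum (fun x _ => Nat.zero_le _) (Finset.mem_univ r₀)
          have hBr₀ : B r₀ = m := by omega
          have hrest : ∀ x : Fin k, x ≠ r₀ → B x = 0 := by
            intro x hx
            have h1 : B r₀ + B x ≤ ∑ i : Fin k, B i := by
              have := Finset.add_sum_erase Finset.univ B (Finset.mem_univ r₀)
              have h2 : B x ≤ ∑ i ∈ Finset.univ.erase r₀, B i :=
                Finset.single_le_sum (fun y _ => Nat.zero_le _)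
                  (Finset.mem_erase.mpr ⟨hx, Finset.mem_univ x⟩)
              omega
            rw [hsum] at h1
            omega
          funext x
          by_cases hx : x = r₀
          · rw [hx, if_pos rfl, hBr₀]
          · rw [if_neg hx, hrest x hx]
        · intro hBeq
          subst hBeq
          refine ⟨⟨fun i => ?_, ?_⟩, ?_⟩
          · show (if i = r₀ then m else 0) < k + 1
            split_ifs <;> omega
          · show (∑ i : Fin k, if i = r₀ then m else 0) = m
            rw [Finset.sum_ite_eq' Finset.univ r₀ (fun _ => m)]
            simp
          · show ¬((if r₀ = r₀ then m else 0) + (s - r) ≤ m)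
            rw [if_pos rfl]
            omega
      rw [hBstar, Finset.sum_singleton, hwM]
      beta_reduce
      have : ∀ i : Fin k, i ≠ r₀ →
          ((Nat.multichoose (c' i) (if i = r₀ then m else 0) : ℕ) : ZMod 2) = 1 := by
        intro i hi
        rw [if_neg hi, Nat.multichoose_zero_right]
        norm_num
      rw [Finset.prod_eq_single r₀ (fun i _ hi => this i hi) (fun h => absurd (Finset.mem_univ r₀) h)]
      rw [if_pos rfl]
      have : c' r₀ = a r - 1 := by
        show (if r₀.1 + 1 < r then 0 else a (r₀.1 + 1) - 1) = a r - 1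
        rw [if_neg (by omega), hr₀v]
      rw [this]
    · rw [if_neg hcase]
      have hempty : Hs.filter (fun B : Fin k → ℕ => ¬ (B r₀ + (s - r) ≤ m)) = ∅ := by
        rw [Finset.filter_eq_empty_iff]
        intro B hB
        rw [hHs, Finset.mem_filter] at hB
        have hble : B r₀ ≤ m := by
          rw [← hB.2]
          exact Finset.single_le_sum (fun x _ => Nat.zero_le _) (Finset.mem_univ r₀)
        have hsr' : s = r := by omega
        simp only [not_not]
        omega
      rw [hempty, Finset.sum_empty]
  -- step 7 : evaluate Hs sum
  have step7 : ∑ B ∈ Hs, wM B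
      = (Nat.multichoose (∑ v ∈ Finset.Icc r k, (a v - 1)) m : ZMod 2) := by
    rw [hHs, hwM]
    rw [conv_sum k m (by omega) c']
    congr 2
    rw [sum_fin_all (f := fun v => if v < r then 0 else a v - 1)]
    have hsplit : Finset.Icc 1 k = Finset.Ioc 0 k := by exact Finset.Icc_add_one_left_eq_Ioc 0 k
    rw [hsplit, ← Finset.sum_Ioc_consecutive _ (by omega : 0 ≤ r - 1) (by omega : r - 1 ≤ k)]
    have hz : (∑ v ∈ Finset.Ioc 0 (r - 1), if v < r then 0 else a v - 1) = 0 := by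
      refine Finset.sum_eq_zero ?_
      intro v hv
      rw [Finset.mem_Ioc] at hv
      rw [if_pos (by omega)]
    rw [hz, zero_add]
    have hIoc : Finset.Ioc (r - 1) k = Finset.Icc r k := by
      rw [← Finset.Icc_add_one_left_eq_Ioc]
      congr 1
    rw [hIoc]
    refine Finset.sum_congr rfl ?_
    intro v hv
    rw [Finset.mem_Icc] at hv
    rw [if_neg (by omega)]
  -- assemble
  rw [step1, step2, step4a, step3, ← step4b]
  have final := step5
  rw [step6] at final
  rw [step7] at final
  rw [final, add_assoc, CharTwo.add_self_eq_zero, add_zero]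


/-- Lemma 4.9 (toplem): `Φ(a, I)` is even for every 0/1-vector `I` other than
`(1,…,1)` if and only if `a_i ≡ 1 (mod 2^{⌊log₂(2i)⌋})` for every `1 ≤ i ≤ k`. -/
theorem stmt_14 (k : ℕ) (hk : 1 ≤ k)
    (a : ℕ → ℕ) (ha : ∀ i ∈ Finset.Icc 1 k, 0 < a i) :
    (∀ I : ℕ → ℕ, (∀ i ∈ Finset.Icc 1 k, I i ≤ 1) →
      (∑ i ∈ Finset.Icc 1 k, I i) < k → Even (Phi k a I)) ↔
    (∀ i ∈ Finset.Icc 1 k, a i ≡ 1 [MOD 2 ^ Nat.log 2 (2 * i)]) := by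
  constructor
  · intro h r
    induction r using Nat.strong_induction_on with
    | _ r IH =>
      intro hr
      rw [Finset.mem_Icc] at hr
      obtain ⟨hr1, hrk⟩ := hr
      have hgood : ∀ j, 1 ≤ j → j < r → a j ≡ 1 [MOD 2 ^ Nat.log 2 (2 * j)] := by
        intro j hj1 hjr
        exact IH j hjr (Finset.mem_Icc.mpr ⟨hj1, by omega⟩)
      have even_phi : ∀ s mm : ℕ, r ≤ s → s ≤ r + 1 → s ≤ k → 1 ≤ mm → mm ≤ r →
          ((Phi k a (fun v => if s - mm + 1 ≤ v ∧ v ≤ s then 0 else 1) : ℕ) : ZMod 2) = 0 := by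
        intro s mm hrs hsr hsk hm1 hmr
        have hEven := h (fun v => if s - mm + 1 ≤ v ∧ v ≤ s then 0 else 1) ?_ ?_
        · rw [ZMod.natCast_eq_zero_iff]
          obtain ⟨c, hc⟩ := hEven
          exact ⟨c, by omega⟩
        · intro i _
          show (if s - mm + 1 ≤ i ∧ i ≤ s then 0 else 1) ≤ 1
          split_ifs <;> omega
        · exact (sumI s mm k).trans_lt (by omega)
      have hM : ∀ mm : ℕ, 1 ≤ mm → mm ≤ r →
          ((Nat.multichoose (∑ v ∈ Finset.Icc r k, (a v - 1)) mm : ℕ) : ZMod 2) = 0 := by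
        intro mm h1 h2
        have hb := phi_block k a ha r r mm hr1 le_rfl (by omega) (by omega) h1 h2 hgood
        rw [even_phi r mm le_rfl (by omega) (by omega) h1 h2] at hb
        rw [if_neg (by omega : ¬ (r = r + 1))] at hb
        simpa using hb.symm
      have hfinal : ∀ mm : ℕ, 1 ≤ mm → mm ≤ r →
          ((Nat.multichoose (a r - 1) mm : ℕ) : ZMod 2) = 0 := by
        intro mm h1 h2
        rcases eq_or_lt_of_le hrk with hrk' | hrk'
        · have hb := hM mm h1 h2
          rw [hrk'] at hb
          rw [Finset.Icc_self, Finset.sum_singleton] at hb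
          rw [← hrk'] at hb
          exact hb
        · have hb := phi_block k a ha r (r + 1) mm hr1 (by omega) (by omega) (by omega)
            h1 h2 hgood
          rw [even_phi (r + 1) mm (by omega) (by omega) (by omega) h1 h2] at hb
          rw [if_pos rfl] at hb
          rw [hM mm h1 h2, zero_add] at hb
          exact hb.symm
      have hdvd := dvd_of_mc_even r (a r - 1) hr1 hfinal
      have ha1 : 1 ≤ a r := ha r (Finset.mem_Icc.mpr ⟨hr1, hrk⟩)
      exact ((Nat.modEq_iff_dvd' ha1).mpr hdvd).symm
  · intro h I hI hIlt
    have hzero : ((Phi k a I : ℕ) : ZMod 2) = 0 := by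
      rw [Phi]
      push_cast
      refine Finset.sum_eq_zero ?_
      intro B hB
      rw [Finset.mem_filter] at hB
      obtain ⟨hpi, hbal, htot⟩ := hB
      have hex : ∃ i : Fin k, B i ≠ 0 := by
        by_contra hno
        push_neg at hno
        have hzz : (∑ i : Fin k, (B i + I (i.1 + 1))) = ∑ i : Fin k, I (i.1 + 1) :=
          Finset.sum_congr rfl (fun i _ => by rw [hno i, Nat.zero_add])
        rw [hzz, sum_fin_all (f := I)] at htot
        omega
      obtain ⟨i₀, hi₀⟩ := hex
      refine Finset.prod_eq_zero (Finset.mem_univ i₀) ?_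
      have hmem : i₀ ∈ Finset.univ.filter (fun x : Fin k => x ≤ i₀) := by simp
      have hb : B i₀ ≤ i₀.1 + 1 :=
        calc B i₀ ≤ B i₀ + I (i₀.1 + 1) := Nat.le_add_right _ _
          _ ≤ ∑ x ∈ Finset.univ.filter (fun x : Fin k => x ≤ i₀), (B x + I (x.1 + 1)) :=
            Finset.single_le_sum (f := fun x : Fin k => B x + I (x.1 + 1))
              (fun x _ => Nat.zero_le _) hmem
          _ ≤ i₀.1 + 1 := hbal i₀
      have hmemIcc : i₀.1 + 1 ∈ Finset.Icc 1 k := Finset.mem_Icc.mpr ⟨by omega, by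
        have := i₀.isLt; omega⟩
      exact weight_even (ha _ hmemIcc) (h _ hmemIcc) (by omega) hb
    obtain ⟨c, hc⟩ := (ZMod.natCast_eq_zero_iff _ 2).mp hzero
    exact ⟨c, by omega⟩
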